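/- Let G₁, G₂ be groups with Hom(G₁, G₂) = 0 (every homomorphism G₁ → G₂ is trivial). Then every automorphism φ of G₁ × G₂ has invertible diagonal components: the maps φ₁₁ : G₁ → G₁ and φ₂₂ : G₂ → G₂ obtained from the inclusions and projections are automorphisms. -/
import Mathlib


/-- If every homomorphism `G₁ → G₂` is trivial, then every automorphism of
`G₁ × G₂` has invertible diagonal components. -/
theorem automorphism_diag_bijective_of_hom_trivial {G₁ G₂ : Type*} [Group G₁] [Group G₂]
    (htriv : ∀ ψ : G₁ →* G₂, ∀ g : G₁, ψ g = 1)
    (φ : G₁ × G₂ →* G₁ × G₂) (hφ : Function.Bijective φ) :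
    Function.Bijective (fun g : G₁ => (φ (g, 1)).1) ∧
      Function.Bijective (fun h : G₂ => (φ (1, h)).2) := by
  have hsnd : ∀ g : G₁, (φ (g, 1)).2 = 1 :=
    htriv ((MonoidHom.snd G₁ G₂).comp (φ.comp (MonoidHom.inl G₁ G₂)))
  set e := MulEquiv.ofBijective φ hφ with he
  have hsnd' : ∀ g : G₁, (e.symm (g, 1)).2 = 1 :=
    htriv ((MonoidHom.snd G₁ G₂).comp (e.symm.toMonoidHom.comp (MonoidHom.inl G₁ G₂)))
  have hφe : ∀ x, φ x = e x := fun x => rfl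
  have h1 : Function.Bijective (fun g : G₁ => (φ (g, 1)).1) := by
    constructor
    · intro a b hab
      have h : φ (a, 1) = φ (b, 1) := by
        ext
        · exact hab
        · rw [hsnd a, hsnd b]
      have := hφ.1 h
      exact ((Prod.mk.injEq ..).mp this).1
    · intro a
      refine ⟨(e.symm (a, 1)).1, ?_⟩
      have h : (((e.symm (a, 1)).1, (1 : G₂)) : G₁ × G₂) = e.symm (a, 1) := by
        ext
        · rfl
        · exact (hsnd' a).symm
      show (φ ((e.symm (a, 1)).1, 1)).1 = a
      rw [hφe, h, e.apply_symm_apply]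
  have h2 : Function.Bijective (fun h : G₂ => (φ (1, h)).2) := by
    constructor
    · have hinj : ∀ h : G₂, (φ (1, h)).2 = 1 → h = 1 := by
        intro h hh
        obtain ⟨g, hg⟩ := h1.2 (φ (1, h)).1
        have heq : φ (g, 1) = φ (1, h) := by
          ext
          · exact hg
          · rw [hsnd g, hh]
        have := hφ.1 heq
        exact ((Prod.mk.injEq ..).mp this).2.symm
      have : Function.Injective ((MonoidHom.snd G₁ G₂).comp (φ.comp (MonoidHom.inr G₁ G₂))) :=
        (injective_iff_map_eq_one _).mpr hinj
      exact this
    · intro k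
      obtain ⟨⟨x, y⟩, hxy⟩ := hφ.2 (1, k)
      refine ⟨y, ?_⟩
      have hsplit : ((x, y) : G₁ × G₂) = (x, 1) * (1, y) := by simp
      calc (φ (1, y)).2 = (φ (x, 1)).2 * (φ (1, y)).2 := by rw [hsnd x, one_mul]
        _ = (φ ((x, 1) * (1, y))).2 := by rw [map_mul]; rfl
        _ = (φ (x, y)).2 := by rw [← hsplit]
        _ = k := by rw [hxy]
  exact ⟨h1, h2⟩
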